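/- Let α > 1. For every σ > 1, ∫_1^{σ} s^{−1/(2α)} (s − 1)^{−1/2} ds < (2α/(α−1)) · σ^{(2α−1)/(2α)} · (σ − 1)^{−1/2}. -/

import Mathlib

open Real MeasureTheory intervalIntegral

/-- For `α > 1` and every `σ > 1`,
`∫_1^σ s^{-1/(2α)} (s-1)^{-1/2} ds < (2α/(α-1)) σ^{(2α-1)/(2α)} (σ-1)^{-1/2}`
(positivity of the Jacobian of the Fermi coordinate transformation). -/
theorem jacobian_positivity_inequality (α σ : ℝ) (hα : 1 < α) (hσ : 1 < σ) :
    (∫ s in (1 : ℝ)..σ, s ^ (-(1 / (2 * α))) * (s - 1) ^ (-(1 : ℝ) / 2))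
      < (2 * α / (α - 1)) * σ ^ ((2 * α - 1) / (2 * α)) * (σ - 1) ^ (-(1 : ℝ) / 2) := by
  have hα0 : (0:ℝ) < α := by linarith
  have h2α : (0:ℝ) < 2 * α := by linarith
  set c : ℝ := 1 / (2 * α) with hc
  have hc0 : 0 < c := by positivity
  have hchalf : c < 1 / 2 := by
    rw [hc, div_lt_div_iff₀ h2α two_pos]; linarith
  set p : ℝ := -c - 1 / 2 with hp
  have hp1 : (-1:ℝ) < p := by rw [hp]; linarith
  -- integrability of the dominating function (s-1)^p on [1, σ]
  have hg : IntervalIntegrable (fun s : ℝ => (s - 1) ^ p) volume 1 σ := by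
    have := (intervalIntegrable_rpow' (a := 0) (b := σ - 1) hp1).comp_sub_right 1
    simpa using this
  -- pointwise bound on [1, σ]
  have hle : ∀ s ∈ Set.Icc (1:ℝ) σ,
      s ^ (-c) * (s - 1) ^ (-(1:ℝ)/2) ≤ (s - 1) ^ p := by
    intro s hs
    rcases eq_or_lt_of_le hs.1 with h1 | h1
    · simp only [← h1, sub_self, Real.zero_rpow (by norm_num : -(1:ℝ)/2 ≠ 0), mul_zero]
      exact Real.rpow_nonneg le_rfl p
    · have hs1 : 0 < s - 1 := by linarith
      have : s ^ (-c) ≤ (s - 1) ^ (-c) :=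
        Real.rpow_le_rpow_of_nonpos hs1 (by linarith) (by linarith)
      calc s ^ (-c) * (s - 1) ^ (-(1:ℝ)/2)
          ≤ (s - 1) ^ (-c) * (s - 1) ^ (-(1:ℝ)/2) := by
            apply mul_le_mul_of_nonneg_right this (Real.rpow_nonneg hs1.le _)
        _ = (s - 1) ^ p := by
            rw [← Real.rpow_add hs1, hp]; congr 1; ring
  -- integrability of the integrand
  have hf : IntervalIntegrable (fun s : ℝ => s ^ (-c) * (s - 1) ^ (-(1:ℝ)/2))
      volume 1 σ := by
    apply hg.mono_fun'
    · apply AEStronglyMeasurable.mul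
      · exact ((by fun_prop : Measurable fun x : ℝ => x ^ (-c)).aestronglyMeasurable).restrict
      · exact ((by fun_prop : Measurable fun x : ℝ => (x - 1) ^ (-(1:ℝ)/2)).aestronglyMeasurable).restrict
    · filter_upwards [MeasureTheory.ae_restrict_mem measurableSet_uIoc] with s hs
      rw [Set.uIoc_of_le hσ.le] at hs
      have h1 : (1:ℝ) < s := hs.1
      have hspos : (0:ℝ) < s := by linarith
      have hs1pos : (0:ℝ) < s - 1 := by linarith
      have h0 : (0:ℝ) ≤ s ^ (-c) * (s - 1) ^ (-(1:ℝ)/2) :=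
        mul_nonneg (Real.rpow_nonneg hspos.le _) (Real.rpow_nonneg hs1pos.le _)
      rw [Real.norm_of_nonneg h0]
      exact hle s ⟨h1.le, hs.2⟩
  -- compare the integrals
  have hmono : (∫ s in (1:ℝ)..σ, s ^ (-c) * (s - 1) ^ (-(1:ℝ)/2))
      ≤ ∫ s in (1:ℝ)..σ, (s - 1) ^ p :=
    intervalIntegral.integral_mono_on hσ.le hf hg hle
  -- compute the dominating integral
  have hval : (∫ s in (1:ℝ)..σ, (s - 1) ^ p)
      = (σ - 1) ^ (p + 1) / (p + 1) := by
    have : (∫ s in (1:ℝ)..σ, (s - 1) ^ p) = ∫ u in (0:ℝ)..(σ - 1), u ^ p := by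
      have := intervalIntegral.integral_comp_sub_right (a := 1) (b := σ)
        (fun u : ℝ => u ^ p) 1
      simpa using this
    rw [this, integral_rpow (Or.inl hp1)]
    rw [Real.zero_rpow (by linarith : p + 1 ≠ 0)]
    ring
  have hp1' : p + 1 = (α - 1) / (2 * α) := by
    rw [hp, hc]; field_simp; ring
  have hσ1 : (0:ℝ) < σ - 1 := by linarith
  -- final strict inequality
  have hq : (0:ℝ) < (2 * α - 1) / (2 * α) := by
    apply div_pos (by linarith) h2α
  have hkey : (σ - 1) ^ ((2 * α - 1) / (2 * α)) < σ ^ ((2 * α - 1) / (2 * α)) :=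
    Real.rpow_lt_rpow hσ1.le (by linarith) hq
  have hsplit : (σ - 1) ^ (p + 1) = (σ - 1) ^ ((2 * α - 1) / (2 * α)) * (σ - 1) ^ (-(1:ℝ)/2) := by
    rw [← Real.rpow_add hσ1, hp1']
    congr 1
    field_simp; ring
  have hcpos : (0:ℝ) < 2 * α / (α - 1) := by
    apply div_pos h2α (by linarith)
  have hhalf : (0:ℝ) < (σ - 1) ^ (-(1:ℝ)/2) := Real.rpow_pos_of_pos hσ1 _
  have hfin : (σ - 1) ^ (p + 1) / (p + 1)
      < 2 * α / (α - 1) * σ ^ ((2 * α - 1) / (2 * α)) * (σ - 1) ^ (-(1:ℝ)/2) := by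
    have e1 : (σ - 1) ^ (p + 1) / (p + 1)
        = 2 * α / (α - 1) * ((σ - 1) ^ ((2 * α - 1) / (2 * α)) * (σ - 1) ^ (-(1:ℝ)/2)) := by
      rw [hsplit, hp1', div_eq_mul_inv, inv_div]; ring
    rw [e1, mul_assoc]
    exact mul_lt_mul_of_pos_left (mul_lt_mul_of_pos_right hkey hhalf) hcpos
  calc (∫ s in (1:ℝ)..σ, s ^ (-(1 / (2 * α))) * (s - 1) ^ (-(1:ℝ)/2))
      = ∫ s in (1:ℝ)..σ, s ^ (-c) * (s - 1) ^ (-(1:ℝ)/2) := by rw [hc]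
    _ ≤ (σ - 1) ^ (p + 1) / (p + 1) := hval ▸ hmono
    _ < _ := hfin
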